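/- arXiv:1303.3541 — 4 statements merged into one kernel-verified Lean document; each statement's English description precedes it below -/
import Mathlib

section
/- Let n ≥ 2 be an integer and let λ, ν ∈ ℂ satisfy Re(λ−ν) > 0 and Re(λ+ν) > n−1. Then the kernel k_{λ,ν}, i.e. the function ℝⁿ → ℂ given by (x, xₙ) ↦ |xₙ|^{λ+ν−n} (|x|² + xₙ²)^{−ν}, is locally integrable on ℝⁿ with respect to Lebesgue measure. -/
open MeasureTheory
open scoped ENNReal

/-- The kernel `k_{λ,ν}(x, xₙ) = |xₙ|^{λ+ν−n} (|x|² + xₙ²)^{−ν}` on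
`ℝⁿ = ℝⁿ⁻¹ × ℝ`, assigned the value `0` on the null set `{xₙ = 0}`. -/
noncomputable def kker (n : ℕ) (lam nu : ℂ) :
    EuclideanSpace ℝ (Fin (n - 1)) × ℝ → ℂ := fun p =>
  if p.2 = 0 then 0
  else ((|p.2| : ℝ) : ℂ) ^ (lam + nu - (n : ℂ)) *
    ((‖p.1‖ ^ 2 + p.2 ^ 2 : ℝ) : ℂ) ^ (-nu)


open Real Set Metric in
/-- Negative powers of the norm are integrable on balls when the exponent is
less than the dimension. -/
lemma aux_norm_rpow_integrableOn
    {E : Type*} [NormedAddCommGroup E] [NormedSpace ℝ E] [MeasurableSpace E] [BorelSpace E]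
    [FiniteDimensional ℝ E] (μ : Measure E) [μ.IsAddHaarMeasure]
    {p : ℝ} (hp0 : 0 ≤ p) (hp : p < Module.finrank ℝ E) (R : ℝ) :
    IntegrableOn (fun x : E => ‖x‖ ^ (-p)) (Metric.closedBall 0 R) μ := by
  rcases eq_or_lt_of_le hp0 with h0 | h0
  · simp only [← h0, neg_zero, Real.rpow_zero]
    exact integrableOn_const measure_closedBall_lt_top.ne
  set d : ℝ := (Module.finrank ℝ E : ℝ) with hd
  have hd1 : 1 < d / p := (one_lt_div h0).2 hp
  constructor
  · exact (measurable_norm.pow measurable_const).aestronglyMeasurable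
  · have hnn : ∀ x : E, 0 ≤ ‖x‖ ^ (-p) := fun x => rpow_nonneg (norm_nonneg _) _
    rw [hasFiniteIntegral_iff_ofReal (Filter.Eventually.of_forall hnn)]
    rw [lintegral_eq_lintegral_meas_le _ (Filter.Eventually.of_forall hnn) (measurable_norm.pow measurable_const).aemeasurable]
    set μR := μ.restrict (Metric.closedBall 0 R) with hμR
    have key : ∀ t ∈ Ioi (1:ℝ), μR {a : E | t ≤ ‖a‖ ^ (-p)} ≤
        ENNReal.ofReal (t ^ (-(d / p))) * μ (ball (0:E) 1) := by
      intro t ht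
      have ht0 : (0:ℝ) < t := lt_trans one_pos ht
      have hsub : {a : E | t ≤ ‖a‖ ^ (-p)} ⊆ Metric.closedBall 0 (t ^ (-p)⁻¹) := by
        intro a ha
        simp only [mem_setOf_eq] at ha
        have ha0 : a ≠ 0 := by
          rintro rfl
          rw [norm_zero, Real.zero_rpow (by linarith : -p < 0).ne] at ha
          linarith
        have hna : 0 < ‖a‖ := norm_pos_iff.2 ha0
        rw [mem_closedBall_zero_iff]
        exact (Real.le_rpow_inv_iff_of_neg hna ht0 (by linarith : -p < 0)).2 ha
      calc μR {a : E | t ≤ ‖a‖ ^ (-p)}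
          ≤ μ {a : E | t ≤ ‖a‖ ^ (-p)} := Measure.restrict_apply_le _ _
        _ ≤ μ (Metric.closedBall 0 (t ^ (-p)⁻¹)) := measure_mono hsub
        _ = ENNReal.ofReal ((t ^ (-p)⁻¹) ^ Module.finrank ℝ E) * μ (ball (0:E) 1) :=
            Measure.addHaar_closedBall _ _ (rpow_nonneg ht0.le _)
        _ = ENNReal.ofReal (t ^ (-(d / p))) * μ (ball (0:E) 1) := by
            congr 1
            rw [← Real.rpow_natCast (t ^ (-p)⁻¹) (Module.finrank ℝ E),
              ← Real.rpow_mul ht0.le]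
            congr 1
            rw [hd, inv_neg, neg_mul, inv_mul_eq_div]
    calc ∫⁻ t in Ioi (0:ℝ), μR {a : E | t ≤ ‖a‖ ^ (-p)}
        ≤ ∫⁻ t in Ioc (0:ℝ) 1 ∪ Ioi 1, μR {a : E | t ≤ ‖a‖ ^ (-p)} :=
          lintegral_mono_set Ioi_subset_Ioc_union_Ioi
      _ ≤ (∫⁻ t in Ioc (0:ℝ) 1, μR {a : E | t ≤ ‖a‖ ^ (-p)})
            + ∫⁻ t in Ioi (1:ℝ), μR {a : E | t ≤ ‖a‖ ^ (-p)} := lintegral_union_le _ _ _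
      _ < ∞ := by
          refine ENNReal.add_lt_top.2 ⟨?_, ?_⟩
          · calc (∫⁻ t in Ioc (0:ℝ) 1, μR {a : E | t ≤ ‖a‖ ^ (-p)})
                ≤ ∫⁻ t in Ioc (0:ℝ) 1, μ (Metric.closedBall (0:E) R) := by
                  refine lintegral_mono fun t => ?_
                  calc μR {a : E | t ≤ ‖a‖ ^ (-p)} ≤ μR univ := measure_mono (subset_univ _)
                    _ = μ (Metric.closedBall (0:E) R) := by
                        rw [hμR, Measure.restrict_apply_univ]
              _ = μ (Metric.closedBall (0:E) R) * volume (Ioc (0:ℝ) 1) :=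
                  setLIntegral_const _ _
              _ < ∞ := by
                  refine ENNReal.mul_lt_top measure_closedBall_lt_top ?_
                  simp [Real.volume_Ioc]
          · calc (∫⁻ t in Ioi (1:ℝ), μR {a : E | t ≤ ‖a‖ ^ (-p)})
                ≤ ∫⁻ t in Ioi (1:ℝ), ENNReal.ofReal (t ^ (-(d / p))) * μ (ball (0:E) 1) :=
                  setLIntegral_mono' measurableSet_Ioi key
              _ = (∫⁻ t in Ioi (1:ℝ), ENNReal.ofReal (t ^ (-(d / p)))) * μ (ball (0:E) 1) :=
                  lintegral_mul_const' _ _ measure_ball_lt_top.ne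
              _ < ∞ := by
                  refine ENNReal.mul_lt_top ?_ measure_ball_lt_top
                  exact (integrableOn_Ioi_rpow_of_lt (by linarith) one_pos).setLIntegral_lt_top

open Real Set Metric in
lemma aux_abs_rpow_integrableOn {q : ℝ} (hq : -1 < q) (R : ℝ) :
    IntegrableOn (fun t : ℝ => |t| ^ q) (Metric.closedBall 0 R) volume := by
  rcases le_or_gt q 0 with h | h
  · have := aux_norm_rpow_integrableOn (E := ℝ) volume (p := -q) (by linarith)
      (by rw [Module.finrank_self]; push_cast; linarith) R
    simpa [Real.norm_eq_abs] using this
  · refine (Continuous.continuousOn ?_).integrableOn_compact (isCompact_closedBall _ _)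
    exact continuous_abs.rpow_const fun x => Or.inr h.le

lemma aux_measurable_kker (n : ℕ) (lam nu : ℂ) : Measurable (kker n lam nu) := by
  unfold kker
  refine Measurable.ite ?_ measurable_const ?_
  · exact (measurable_snd (measurableSet_singleton (0:ℝ)))
  · refine Measurable.mul ?_ ?_
    · exact (Complex.measurable_ofReal.comp (by fun_prop)).pow measurable_const
    · exact (Complex.measurable_ofReal.comp (by fun_prop)).pow measurable_const

theorem kernel_locallyIntegrable (n : ℕ) (hn : 2 ≤ n) (lam nu : ℂ)
    (h1 : 0 < (lam - nu).re) (h2 : (n : ℝ) - 1 < (lam + nu).re) :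
    LocallyIntegrable (kker n lam nu) volume := by
  classical
  set E := EuclideanSpace ℝ (Fin (n - 1))
  haveI : Nonempty (Fin (n - 1)) := ⟨⟨0, by omega⟩⟩
  set a : ℝ := (lam + nu).re with ha
  set b : ℝ := nu.re with hb
  have hab : 0 < a - 2 * b := by
    have : (lam - nu).re = a - 2 * b := by
      simp only [ha, hb, Complex.sub_re, Complex.add_re]; ring
    linarith [h1, this ▸ h1]
  have hn1 : (1:ℝ) ≤ (n:ℝ) - 1 := by
    have : (2:ℝ) ≤ n := by exact_mod_cast hn
    linarith
  rw [MeasureTheory.locallyIntegrable_iff]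
  intro K hK
  obtain ⟨r, hKr⟩ := hK.isBounded.subset_closedBall (0 : E × ℝ)
  set R : ℝ := max r 0 with hR
  have hR0 : 0 ≤ R := le_max_right _ _
  have hKR : K ⊆ Metric.closedBall (0:E) R ×ˢ Metric.closedBall (0:ℝ) R := by
    rw [closedBall_prod_same]
    exact hKr.trans (Metric.closedBall_subset_closedBall (le_max_left _ _))
  refine IntegrableOn.mono_set ?_ hKR
  -- find the dominating exponents
  obtain ⟨C, pp, qq, hC0, hpp0, hppn, hqq, hbound⟩ :
      ∃ (C pp qq : ℝ), 0 ≤ C ∧ 0 ≤ pp ∧ pp < (n:ℝ) - 1 ∧ -1 < qq ∧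
        ∀ p : E × ℝ, p.1 ≠ 0 → p.2 ≠ 0 → ‖p.1‖ ≤ R → |p.2| ≤ R →
          ‖kker n lam nu p‖ ≤ C * (‖p.1‖ ^ (-pp) * |p.2| ^ qq) := by
    have habs : ∀ p : E × ℝ, p.2 ≠ 0 →
        ‖kker n lam nu p‖ = |p.2| ^ (a - n) * (‖p.1‖ ^ 2 + p.2 ^ 2) ^ (-b) := by
      intro p hp2
      have hpos2 : (0:ℝ) < |p.2| := abs_pos.2 hp2
      have hposS : (0:ℝ) < ‖p.1‖ ^ 2 + p.2 ^ 2 := by positivity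
      have e1 : (lam + nu - (n:ℂ)).re = a - (n:ℝ) := by
        simp [ha, Complex.sub_re, Complex.add_re]
      have e2 : (-nu).re = -b := by simp [hb]
      simp only [kker, if_neg hp2, norm_mul,
        Complex.norm_cpow_eq_rpow_re_of_pos hpos2, Complex.norm_cpow_eq_rpow_re_of_pos hposS,
        e1, e2]
    rcases le_or_gt b 0 with hble | hbpos
    · refine ⟨(2 * R ^ 2 + 1) ^ (-b), 0, a - n, Real.rpow_nonneg (by positivity) _, le_rfl,
        by linarith, by linarith, ?_⟩
      intro p hp1 hp2 hx ht
      rw [habs p hp2]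
      have hposS : (0:ℝ) < ‖p.1‖ ^ 2 + p.2 ^ 2 := by
        have : (0:ℝ) < p.2 ^ 2 := by positivity
        positivity
      have hSle : ‖p.1‖ ^ 2 + p.2 ^ 2 ≤ 2 * R ^ 2 + 1 := by
        have h1' : ‖p.1‖ ^ 2 ≤ R ^ 2 := by
          have := norm_nonneg p.1; nlinarith
        have h2' : p.2 ^ 2 ≤ R ^ 2 := by
          have := abs_nonneg p.2; nlinarith [sq_abs p.2]
        linarith
      have hSb : (‖p.1‖ ^ 2 + p.2 ^ 2) ^ (-b) ≤ (2 * R ^ 2 + 1) ^ (-b) :=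
        Real.rpow_le_rpow hposS.le hSle (by linarith)
      have h0t : (0:ℝ) ≤ |p.2| ^ (a - n) := Real.rpow_nonneg (abs_nonneg _) _
      calc |p.2| ^ (a - n) * (‖p.1‖ ^ 2 + p.2 ^ 2) ^ (-b)
          ≤ |p.2| ^ (a - n) * (2 * R ^ 2 + 1) ^ (-b) := by
            exact mul_le_mul_of_nonneg_left hSb h0t
        _ = (2 * R ^ 2 + 1) ^ (-b) * (‖p.1‖ ^ (-(0:ℝ)) * |p.2| ^ (a - n)) := by
            rw [neg_zero, Real.rpow_zero]; ring
    · -- 0 < b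
      set c : ℝ := (max 0 (2 * b - a + n - 1) + min (2 * b) ((n:ℝ) - 1)) / 4 with hc
      have hL1 : 2 * b - a + n - 1 < 2 * b := by linarith
      have hL2 : 2 * b - a + n - 1 < (n:ℝ) - 1 := by linarith
      have hLU : max 0 (2 * b - a + n - 1) < min (2 * b) ((n:ℝ) - 1) := by
        rcases max_cases 0 (2 * b - a + n - 1) with ⟨h, _⟩ | ⟨h, _⟩ <;>
          rcases min_cases (2 * b) ((n:ℝ) - 1) with ⟨h', _⟩ | ⟨h', _⟩ <;> rw [h, h'] <;> linarith
      have h2cgt : max 0 (2 * b - a + n - 1) < 2 * c := by rw [hc]; linarith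
      have h2clt : 2 * c < min (2 * b) ((n:ℝ) - 1) := by rw [hc]; linarith
      have hc0 : 0 < 2 * c := lt_of_le_of_lt (le_max_left _ _) h2cgt
      have hcL : 2 * b - a + n - 1 < 2 * c := lt_of_le_of_lt (le_max_right _ _) h2cgt
      have hcb : 2 * c < 2 * b := lt_of_lt_of_le h2clt (min_le_left _ _)
      have hcn : 2 * c < (n:ℝ) - 1 := lt_of_lt_of_le h2clt (min_le_right _ _)
      refine ⟨1, 2 * c, a - n - 2 * (b - c), zero_le_one, by linarith, hcn, by linarith, ?_⟩
      intro p hp1 hp2 hx ht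
      rw [habs p hp2]
      have hA : (0:ℝ) < ‖p.1‖ ^ 2 := by
        have : (0:ℝ) < ‖p.1‖ := norm_pos_iff.2 hp1
        positivity
      have hB : (0:ℝ) < p.2 ^ 2 := by positivity
      have hnx : (0:ℝ) < ‖p.1‖ := norm_pos_iff.2 hp1
      have hnt : (0:ℝ) < |p.2| := abs_pos.2 hp2
      -- key inequality : (A + B)^(-b) ≤ A^(-c) * B^(-(b-c))
      have hkey : (‖p.1‖ ^ 2 + p.2 ^ 2) ^ (-b) ≤
          (‖p.1‖ ^ 2) ^ (-c) * (p.2 ^ 2) ^ (-(b - c)) := by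
        have hSpos : (0:ℝ) < ‖p.1‖ ^ 2 + p.2 ^ 2 := by positivity
        have hprod : (‖p.1‖ ^ 2) ^ c * (p.2 ^ 2) ^ (b - c) ≤
            (‖p.1‖ ^ 2 + p.2 ^ 2) ^ b := by
          have e1 : (‖p.1‖ ^ 2) ^ c ≤ (‖p.1‖ ^ 2 + p.2 ^ 2) ^ c :=
            Real.rpow_le_rpow hA.le (by linarith) (by linarith)
          have e2 : (p.2 ^ 2) ^ (b - c) ≤ (‖p.1‖ ^ 2 + p.2 ^ 2) ^ (b - c) :=
            Real.rpow_le_rpow hB.le (by linarith) (by linarith)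
          calc (‖p.1‖ ^ 2) ^ c * (p.2 ^ 2) ^ (b - c)
              ≤ (‖p.1‖ ^ 2 + p.2 ^ 2) ^ c * (‖p.1‖ ^ 2 + p.2 ^ 2) ^ (b - c) :=
                mul_le_mul e1 e2 (Real.rpow_nonneg hB.le _) (Real.rpow_nonneg hSpos.le _)
            _ = (‖p.1‖ ^ 2 + p.2 ^ 2) ^ b := by
                rw [← Real.rpow_add hSpos]; ring_nf
        have hpr : (0:ℝ) < (‖p.1‖ ^ 2) ^ c * (p.2 ^ 2) ^ (b - c) := by
          have := Real.rpow_pos_of_pos hA c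
          have := Real.rpow_pos_of_pos hB (b - c)
          positivity
        rw [Real.rpow_neg hSpos.le, Real.rpow_neg hA.le, Real.rpow_neg hB.le, ← mul_inv]
        exact inv_anti₀ hpr hprod
      have hAe : (‖p.1‖ ^ 2) ^ (-c) = ‖p.1‖ ^ (-(2 * c)) := by
        rw [← Real.rpow_natCast ‖p.1‖ 2, ← Real.rpow_mul (norm_nonneg _)]
        norm_num
      have hBe : (p.2 ^ 2) ^ (-(b - c)) = |p.2| ^ (-(2 * (b - c))) := by
        rw [← sq_abs p.2, ← Real.rpow_natCast |p.2| 2, ← Real.rpow_mul (abs_nonneg _)]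
        norm_num
        ring_nf
      calc |p.2| ^ (a - n) * (‖p.1‖ ^ 2 + p.2 ^ 2) ^ (-b)
          ≤ |p.2| ^ (a - n) * ((‖p.1‖ ^ 2) ^ (-c) * (p.2 ^ 2) ^ (-(b - c))) :=
            mul_le_mul_of_nonneg_left hkey (Real.rpow_nonneg (abs_nonneg _) _)
        _ = ‖p.1‖ ^ (-(2 * c)) * (|p.2| ^ (a - n) * |p.2| ^ (-(2 * (b - c)))) := by
            rw [hAe, hBe]; ring
        _ = 1 * (‖p.1‖ ^ (-(2 * c)) * |p.2| ^ (a - n - 2 * (b - c))) := by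
            rw [← Real.rpow_add hnt, one_mul]
            ring_nf
  -- the dominating function is integrable on the product of balls
  have hx : IntegrableOn (fun x : E => ‖x‖ ^ (-pp)) (Metric.closedBall 0 R) volume := by
    refine aux_norm_rpow_integrableOn volume hpp0 ?_ R
    rw [finrank_euclideanSpace_fin]
    have : ((n - 1 : ℕ) : ℝ) = (n:ℝ) - 1 := by
      have : (1:ℕ) ≤ n := by omega
      push_cast [Nat.cast_sub this]
      ring
    rw [this]; exact hppn
  have ht : IntegrableOn (fun t : ℝ => |t| ^ qq) (Metric.closedBall 0 R) volume :=
    aux_abs_rpow_integrableOn hqq R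
  have hg : IntegrableOn
      (fun p : E × ℝ => C * (‖p.1‖ ^ (-pp) * |p.2| ^ qq))
      (Metric.closedBall (0:E) R ×ˢ Metric.closedBall (0:ℝ) R) volume := by
    rw [IntegrableOn, Measure.volume_eq_prod, ← Measure.prod_restrict]
    exact (Integrable.mul_prod hx ht).const_mul C
  -- a.e. bounds
  have hnull1 : (volume : Measure (E × ℝ)) {p : E × ℝ | p.1 = 0} = 0 := by
    haveI : Nontrivial E := by
      have hfr : 0 < Module.finrank ℝ E := by
        rw [finrank_euclideanSpace_fin]; omega
      exact Module.nontrivial_of_finrank_pos hfr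
    have : {p : E × ℝ | p.1 = 0} = ({0} : Set E) ×ˢ (Set.univ : Set ℝ) := by
      ext p
      simp only [Set.mem_setOf_eq, Set.mem_prod, Set.mem_singleton_iff, Set.mem_univ, and_true]
    rw [Measure.volume_eq_prod, this, Measure.prod_prod, measure_singleton, zero_mul]
  have hnull2 : (volume : Measure (E × ℝ)) {p : E × ℝ | p.2 = 0} = 0 := by
    have : {p : E × ℝ | p.2 = 0} = (Set.univ : Set E) ×ˢ ({0} : Set ℝ) := by
      ext p
      simp only [Set.mem_setOf_eq, Set.mem_prod, Set.mem_singleton_iff, Set.mem_univ, true_and]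
    rw [Measure.volume_eq_prod, this, Measure.prod_prod, measure_singleton, mul_zero]
  have hae1 : ∀ᵐ p : E × ℝ ∂volume, p.1 ≠ 0 := by
    rw [MeasureTheory.ae_iff]
    simpa only [ne_eq, not_not] using hnull1
  have hae2 : ∀ᵐ p : E × ℝ ∂volume, p.2 ≠ 0 := by
    rw [MeasureTheory.ae_iff]
    simpa only [ne_eq, not_not] using hnull2
  refine Integrable.mono' hg
    ((aux_measurable_kker n lam nu).aestronglyMeasurable) ?_
  have hmem := ae_restrict_mem (μ := (volume : Measure (E × ℝ)))
    ((measurableSet_closedBall).prod (measurableSet_closedBall) :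
      MeasurableSet (Metric.closedBall (0:E) R ×ˢ Metric.closedBall (0:ℝ) R))
  filter_upwards [hmem, ae_restrict_of_ae hae1, ae_restrict_of_ae hae2] with p hp hp1 hp2
  rw [Set.mem_setOf_eq, Set.mem_prod] at hp
  exact hbound p hp1 hp2 (by simpa using hp.1) (by simpa [Real.norm_eq_abs] using hp.2)
end

section
/- Let n ≥ 2 be an integer and let λ, ν ∈ ℂ satisfy Re(λ−ν) > 0 and Re(λ+ν) > n−1. Then for every Schwartz function φ on ℝⁿ, the function (x, xₙ) ↦ k_{λ,ν}(x, xₙ)·φ(x, xₙ) is Lebesgue integrable on ℝⁿ. -/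
open MeasureTheory

open Set Real

section Aux

/-- 1D integrability of `|s|^e (1+|s|)^{-N}`. -/
lemma oneD {e N : ℝ} (he : -1 < e) (hN : max e 0 + 2 ≤ N) :
    Integrable (fun s : ℝ => |s| ^ e * (1 + |s|) ^ (-N)) := by
  have hmeas : AEStronglyMeasurable (fun s : ℝ => |s| ^ e * (1 + |s|) ^ (-N)) volume := by
    apply Measurable.aestronglyMeasurable
    fun_prop
  have habs : ∀ s : ℝ, 0 ≤ |s| ^ e * (1 + |s|) ^ (-N) := by
    intro s; positivity
  have hIoc : IntegrableOn (fun s : ℝ => |s| ^ e) (Icc (-1 : ℝ) 1) := by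
    have h01 : IntervalIntegrable (fun s : ℝ => |s| ^ e) volume 0 1 := by
      have := intervalIntegral.intervalIntegrable_rpow' (a := 0) (b := 1) he
      rw [intervalIntegrable_iff_integrableOn_Ioc_of_le zero_le_one] at this ⊢
      exact this.congr_fun (fun s hs => by rw [abs_of_pos hs.1]) measurableSet_Ioc
    have hneg : IntervalIntegrable (fun s : ℝ => |s| ^ e) volume (-1) 0 := by
      have := ((IntervalIntegrable.iff_comp_neg).mp h01)
      simpa using this.symm
    have := (hneg.trans h01)
    rw [intervalIntegrable_iff_integrableOn_Ioc_of_le (by norm_num : (-1:ℝ) ≤ 1)] at this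
    exact this.congr_set_ae Ioc_ae_eq_Icc.symm
  have h1 : IntegrableOn (fun s : ℝ => |s| ^ e * (1 + |s|) ^ (-N)) {s : ℝ | |s| ≤ 1} := by
    have hsub : {s : ℝ | |s| ≤ 1} = Icc (-1 : ℝ) 1 := by ext s; simp [abs_le]
    rw [hsub]
    refine hIoc.mono' hmeas.restrict ?_
    filter_upwards with s
    rw [Real.norm_eq_abs, abs_of_nonneg (habs s)]
    have h2 : (1 + |s|) ^ (-N) ≤ 1 := by
      apply Real.rpow_le_one_of_one_le_of_nonpos (le_add_of_nonneg_right (abs_nonneg s))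
      have : (0:ℝ) ≤ max e 0 := le_max_right _ _
      linarith
    calc |s| ^ e * (1 + |s|) ^ (-N) ≤ |s| ^ e * 1 := by
          apply mul_le_mul_of_nonneg_left h2 (by positivity)
      _ = |s| ^ e := mul_one _
  have h2 : IntegrableOn (fun s : ℝ => |s| ^ e * (1 + |s|) ^ (-N)) {s : ℝ | 1 < |s|} := by
    have hint : Integrable (fun s : ℝ => (1 + |s|) ^ (-(2:ℝ))) := by
      have := integrable_one_add_norm (E := ℝ) (μ := volume) (r := 2) (by simp)
      simpa [Real.norm_eq_abs] using this
    refine (hint.integrableOn).mono' hmeas.restrict ?_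
    have hms : MeasurableSet {s : ℝ | 1 < |s|} := by
      exact measurableSet_lt measurable_const (by fun_prop)
    filter_upwards [ae_restrict_mem hms] with s hs
    rw [Real.norm_eq_abs, abs_of_nonneg (habs s)]
    have hs1 : (1:ℝ) ≤ |s| := hs.le
    have hb1 : (1:ℝ) ≤ 1 + |s| := le_add_of_nonneg_right (abs_nonneg s)
    have step1 : |s| ^ e ≤ (1 + |s|) ^ (max e 0) := by
      calc |s| ^ e ≤ |s| ^ (max e 0) :=
            Real.rpow_le_rpow_of_exponent_le hs1 (le_max_left _ _)
        _ ≤ (1 + |s|) ^ (max e 0) :=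
            Real.rpow_le_rpow (by positivity) (by linarith) (le_max_right _ _)
    calc |s| ^ e * (1 + |s|) ^ (-N)
        ≤ (1 + |s|) ^ (max e 0) * (1 + |s|) ^ (-N) := by
          apply mul_le_mul_of_nonneg_right step1 (by positivity)
      _ = (1 + |s|) ^ (max e 0 + -N) := (Real.rpow_add (by positivity) _ _).symm
      _ ≤ (1 + |s|) ^ (-(2:ℝ)) :=
          Real.rpow_le_rpow_of_exponent_le hb1 (by linarith)
  rw [← integrableOn_univ]
  have : (univ : Set ℝ) = {s : ℝ | |s| ≤ 1} ∪ {s : ℝ | 1 < |s|} := by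
    ext s; by_cases h : |s| ≤ 1 <;> simp [h, lt_of_not_ge, not_le.mp]
  rw [this]
  exact h1.union h2

variable {m : ℕ}

lemma coord_null (i : Fin m) :
    volume {x : EuclideanSpace ℝ (Fin m) | x i = 0} = 0 := by
  have : {x : EuclideanSpace ℝ (Fin m) | x i = 0}
      = (LinearMap.ker (EuclideanSpace.projₗ (𝕜 := ℝ) i) : Set (EuclideanSpace ℝ (Fin m))) := by
    ext x; simp [LinearMap.mem_ker]
  rw [this]
  apply Measure.addHaar_submodule
  intro h
  have h1 : (EuclideanSpace.single i (1:ℝ) : EuclideanSpace ℝ (Fin m)) ∈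
      LinearMap.ker (EuclideanSpace.projₗ (𝕜 := ℝ) i) := h ▸ Submodule.mem_top
  simp [LinearMap.mem_ker] at h1

lemma euclid_integrable_prod (g : ℝ → ℝ) (hg : Integrable g) :
    Integrable (fun x : EuclideanSpace ℝ (Fin m) => ∏ i, g (x i)) := by
  have h1 : Integrable (fun y : Fin m → ℝ => ∏ i, g (y i)) :=
    Integrable.fintype_prod (f := fun _ => g) (fun _ => hg)
  have h2 := (EuclideanSpace.volume_preserving_symm_measurableEquiv_toLp (Fin m))
  exact ((h2.integrable_comp h1.aestronglyMeasurable).mpr h1)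

lemma bad_null :
    volume {p : EuclideanSpace ℝ (Fin m) × ℝ | p.2 = 0 ∨ ∃ i, p.1 i = 0} = 0 := by
  have h0 : volume {p : EuclideanSpace ℝ (Fin m) × ℝ | p.2 = 0} = 0 := by
    have : {p : EuclideanSpace ℝ (Fin m) × ℝ | p.2 = 0}
        = (univ : Set (EuclideanSpace ℝ (Fin m))) ×ˢ ({0} : Set ℝ) := by
      ext p
      constructor
      · intro h; exact ⟨trivial, h⟩
      · intro h; exact h.2
    rw [this, Measure.volume_eq_prod, Measure.prod_prod]
    simp
  have hi : ∀ i : Fin m, volume {p : EuclideanSpace ℝ (Fin m) × ℝ | p.1 i = 0} = 0 := by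
    intro i
    have : {p : EuclideanSpace ℝ (Fin m) × ℝ | p.1 i = 0}
        = {x : EuclideanSpace ℝ (Fin m) | x i = 0} ×ˢ (univ : Set ℝ) := by
      ext p
      constructor
      · intro h; exact ⟨h, trivial⟩
      · intro h; exact h.1
    rw [this, Measure.volume_eq_prod, Measure.prod_prod, coord_null i]
    simp
  have hsub : {p : EuclideanSpace ℝ (Fin m) × ℝ | p.2 = 0 ∨ ∃ i, p.1 i = 0}
      ⊆ {p : EuclideanSpace ℝ (Fin m) × ℝ | p.2 = 0}
        ∪ ⋃ i, {p : EuclideanSpace ℝ (Fin m) × ℝ | p.1 i = 0} := by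
    intro p hp
    rcases hp with h | ⟨i, h⟩
    · exact Or.inl h
    · exact Or.inr (mem_iUnion.mpr ⟨i, h⟩)
  refine measure_mono_null hsub ?_
  refine le_antisymm ?_ zero_le
  calc volume _ ≤ _ := measure_union_le _ _
    _ ≤ 0 + 0 := by
        refine add_le_add h0.le ?_
        exact (measure_iUnion_le _).trans (by simp [hi])
    _ = 0 := by simp

lemma kker_aesm (n : ℕ) (lam nu : ℂ) :
    AEStronglyMeasurable (kker n lam nu) volume := by
  set U : Set (EuclideanSpace ℝ (Fin (n-1)) × ℝ) := {p | p.2 ≠ 0} with hU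
  have hUopen : IsOpen U := isOpen_ne.preimage continuous_snd
  have hUc : volume Uᶜ = 0 := by
    have : Uᶜ = (univ : Set (EuclideanSpace ℝ (Fin (n-1)))) ×ˢ ({0} : Set ℝ) := by
      ext p
      constructor
      · intro h; exact ⟨trivial, not_not.mp h⟩
      · intro h; simp only [hU, mem_compl_iff, mem_setOf_eq, not_not]; exact h.2
    rw [this, Measure.volume_eq_prod, Measure.prod_prod]
    simp
  have hrestrict : volume.restrict U = volume :=
    Measure.restrict_eq_self_of_ae_mem (by
      rw [ae_iff]; exact hUc)
  have hcont : ContinuousOn (fun p : EuclideanSpace ℝ (Fin (n-1)) × ℝ =>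
      ((|p.2| : ℝ) : ℂ) ^ (lam + nu - (n : ℂ)) *
      ((‖p.1‖ ^ 2 + p.2 ^ 2 : ℝ) : ℂ) ^ (-nu)) U := by
    apply ContinuousOn.mul
    · apply ContinuousOn.cpow_const
      · exact (Complex.continuous_ofReal.comp (continuous_snd.abs)).continuousOn
      · intro p hp
        simp only [Complex.ofReal_mem_slitPlane]
        exact abs_pos.mpr hp
    · apply ContinuousOn.cpow_const
      · apply Continuous.continuousOn
        exact Complex.continuous_ofReal.comp
          (((continuous_fst.norm.pow 2).add (continuous_snd.pow 2)))
      · intro p hp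
        simp only [Complex.ofReal_mem_slitPlane]
        have : (0:ℝ) < p.2 ^ 2 := pow_two_pos_of_ne_zero hp
        nlinarith [sq_nonneg ‖p.1‖]
  have h1 : AEStronglyMeasurable (kker n lam nu) (volume.restrict U) := by
    refine (hcont.aestronglyMeasurable hUopen.measurableSet).congr ?_
    filter_upwards [ae_restrict_mem hUopen.measurableSet] with p hp
    simp only [kker, if_neg hp]
  rwa [hrestrict] at h1

lemma kker_norm (n : ℕ) (lam nu : ℂ) (p : EuclideanSpace ℝ (Fin (n-1)) × ℝ)
    (ht : p.2 ≠ 0) :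
    ‖kker n lam nu p‖ = |p.2| ^ ((lam + nu).re - n) * (‖p.1‖^2 + p.2^2) ^ (-nu.re) := by
  have h1 : (0:ℝ) < |p.2| := abs_pos.mpr ht
  have h2 : (0:ℝ) < ‖p.1‖^2 + p.2^2 := by
    have := pow_two_pos_of_ne_zero ht
    positivity
  rw [kker]
  simp only [if_neg ht]
  rw [norm_mul,
    Complex.norm_cpow_eq_rpow_re_of_pos h1, Complex.norm_cpow_eq_rpow_re_of_pos h2]
  norm_num [Complex.sub_re]

lemma sq_rpow_eq {x : ℝ} (hx : 0 ≤ x) (e : ℝ) : (x^2) ^ e = x ^ (2*e) := by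
  rw [← Real.rpow_natCast x 2, ← Real.rpow_mul hx]
  norm_num

lemma kker_bound (n : ℕ) (hn : 2 ≤ n) (lam nu : ℂ)
    (h1 : 0 < (lam - nu).re) (h2 : (n : ℝ) - 1 < (lam + nu).re) :
    ∃ a B K C : ℝ, -1 < a ∧ -((n:ℝ)-1) < B ∧ B ≤ 0 ∧ 0 ≤ K ∧ 0 ≤ C ∧
      ∀ p : EuclideanSpace ℝ (Fin (n-1)) × ℝ, p.2 ≠ 0 → p.1 ≠ 0 →
        ‖kker n lam nu p‖ ≤ C * (1 + ‖p‖) ^ K * |p.2| ^ a * ‖p.1‖ ^ B := by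
  set α := (lam + nu).re with hα
  set c := nu.re with hc
  have hβ : 0 < α - 2*c := by
    have : (lam - nu).re = α - 2*c := by
      simp only [hα, hc, Complex.add_re, Complex.sub_re]; ring
    linarith [this ▸ h1]
  have hn' : (2:ℝ) ≤ (n:ℝ) := by exact_mod_cast hn
  rcases le_or_gt c 0 with hcase | hcase
  · -- c ≤ 0
    refine ⟨α - n, 0, -2*c, (2:ℝ)^(-c), by linarith, by linarith, le_refl 0,
      by linarith, by positivity, ?_⟩
    intro p ht hx0
    have habs : (0:ℝ) < |p.2| := abs_pos.mpr ht
    have ht2 : (0:ℝ) < p.2^2 := pow_two_pos_of_ne_zero ht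
    have hr : (0:ℝ) < ‖p.1‖^2 + p.2^2 := by positivity
    rw [kker_norm n lam nu p ht, ← hα, ← hc, Real.rpow_zero, mul_one]
    have hle : ‖p.1‖^2 + p.2^2 ≤ 2*(1+‖p‖)^2 := by
      have e1 : ‖p.1‖ ≤ ‖p‖ := norm_fst_le p
      have e2 : |p.2| ≤ ‖p‖ := by
        rw [← Real.norm_eq_abs]; exact norm_snd_le p
      have e3 : p.2^2 = |p.2|^2 := (sq_abs _).symm
      have e4 : ‖p.1‖^2 ≤ ‖p‖^2 := pow_le_pow_left₀ (norm_nonneg p.1) e1 2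
      have e5 : |p.2|^2 ≤ ‖p‖^2 := pow_le_pow_left₀ (abs_nonneg p.2) e2 2
      nlinarith [norm_nonneg p]
    have step : (‖p.1‖^2 + p.2^2) ^ (-c) ≤ (2:ℝ)^(-c) * (1+‖p‖)^(-2*c) := by
      have b1 : (‖p.1‖^2 + p.2^2) ^ (-c) ≤ (2*(1+‖p‖)^2) ^ (-c) :=
        Real.rpow_le_rpow hr.le hle (by linarith)
      have b2 : ((2:ℝ)*(1+‖p‖)^2) ^ (-c) = (2:ℝ)^(-c) * ((1+‖p‖)^2)^(-c) :=
        Real.mul_rpow (by norm_num) (by positivity)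
      have b3 : ((1+‖p‖)^2 : ℝ)^(-c) = (1+‖p‖)^(-2*c) := by
        rw [sq_rpow_eq (by positivity)]
        norm_num
      calc (‖p.1‖^2 + p.2^2) ^ (-c) ≤ (2*(1+‖p‖)^2) ^ (-c) := b1
        _ = (2:ℝ)^(-c) * (1+‖p‖)^(-2*c) := by rw [b2, b3]
    calc |p.2| ^ (α - n) * (‖p.1‖^2 + p.2^2) ^ (-c)
        ≤ |p.2| ^ (α - n) * ((2:ℝ)^(-c) * (1+‖p‖)^(-2*c)) :=
          mul_le_mul_of_nonneg_left step (by positivity)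
      _ = (2:ℝ)^(-c) * (1+‖p‖)^(-2*c) * |p.2| ^ (α - n) := by ring
  · -- c > 0
    set hi := (α - (n:ℝ) + 1)/(2*c) with hhi
    set lo := 1 - ((n:ℝ)-1)/(2*c) with hlo
    set u := min hi 1 with hu
    set θ := max 0 ((lo+u)/2) with hθ
    have h2c : (0:ℝ) < 2*c := by linarith
    have hhi_pos : 0 < hi := div_pos (by linarith) h2c
    have hlo_lt_hi : lo < hi := by
      rw [hlo, hhi, sub_lt_iff_lt_add, ← add_div, lt_div_iff₀ h2c, one_mul]
      linarith
    have hlo_lt_one : lo < 1 := by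
      rw [hlo]
      have : 0 < ((n:ℝ)-1)/(2*c) := div_pos (by linarith) h2c
      linarith
    have hlo_lt_u : lo < u := lt_min hlo_lt_hi hlo_lt_one
    have hu_pos : 0 < u := lt_min hhi_pos one_pos
    clear_value hi lo u θ
    have hθ_nonneg : (0:ℝ) ≤ θ := hθ ▸ le_max_left _ _
    have hmid_lt_u : (lo+u)/2 < u := by linarith
    have hθ_lt_u : θ < u := hθ ▸ max_lt hu_pos hmid_lt_u
    have hθ_gt_lo : lo < θ := lt_of_lt_of_le (by linarith : lo < (lo+u)/2) (hθ ▸ le_max_right _ _)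
    have hθ_le_one : θ ≤ 1 := (hθ_lt_u.trans_le (hu ▸ min_le_right hi 1)).le
    have hθ_lt_hi : θ < hi := hθ_lt_u.trans_le (hu ▸ min_le_left hi 1)
    have ha : -1 < α - n - 2*θ*c := by
      have := (lt_div_iff₀ h2c).mp (hhi ▸ hθ_lt_hi)
      nlinarith
    have hB : -((n:ℝ)-1) < -(2*(1-θ)*c) := by
      have h3 : 1-θ < ((n:ℝ)-1)/(2*c) := by
        rw [hlo] at hθ_gt_lo; linarith
      have := (lt_div_iff₀ h2c).mp h3
      nlinarith
    refine ⟨α - n - 2*θ*c, -(2*(1-θ)*c), 0, 1, ha, hB, ?_, le_refl 0, zero_le_one, ?_⟩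
    · nlinarith
    intro p ht hx0
    have habs : (0:ℝ) < |p.2| := abs_pos.mpr ht
    have ht2 : (0:ℝ) < p.2^2 := pow_two_pos_of_ne_zero ht
    have hxn : (0:ℝ) < ‖p.1‖ := norm_pos_iff.mpr hx0
    have hr : (0:ℝ) < ‖p.1‖^2 + p.2^2 := by positivity
    rw [kker_norm n lam nu p ht, ← hα, ← hc, Real.rpow_zero, one_mul, one_mul]
    have hsplit : (‖p.1‖^2 + p.2^2) ^ (-c)
        = (‖p.1‖^2 + p.2^2) ^ (-(θ*c)) * (‖p.1‖^2 + p.2^2) ^ (-((1-θ)*c)) := by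
      rw [← Real.rpow_add hr]; congr 1; ring
    have b1 : (‖p.1‖^2 + p.2^2) ^ (-(θ*c)) ≤ |p.2| ^ (-(2*θ*c)) := by
      have hb1 : (‖p.1‖^2 + p.2^2) ^ (-(θ*c)) ≤ (p.2^2) ^ (-(θ*c)) :=
        Real.rpow_le_rpow_of_nonpos ht2 (le_add_of_nonneg_left (by positivity))
          (neg_nonpos.mpr (mul_nonneg hθ_nonneg hcase.le))
      calc (‖p.1‖^2 + p.2^2) ^ (-(θ*c)) ≤ (p.2^2) ^ (-(θ*c)) := hb1
        _ = (|p.2|^2) ^ (-(θ*c)) := by rw [sq_abs]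
        _ = |p.2| ^ (-(2*θ*c)) := by rw [sq_rpow_eq (abs_nonneg _)]; congr 1; ring
    have b2 : (‖p.1‖^2 + p.2^2) ^ (-((1-θ)*c)) ≤ ‖p.1‖ ^ (-(2*(1-θ)*c)) := by
      have hb2 : (‖p.1‖^2 + p.2^2) ^ (-((1-θ)*c)) ≤ (‖p.1‖^2) ^ (-((1-θ)*c)) :=
        Real.rpow_le_rpow_of_nonpos (by positivity) (le_add_of_nonneg_right ht2.le)
          (neg_nonpos.mpr (mul_nonneg (by linarith) hcase.le))
      calc (‖p.1‖^2 + p.2^2) ^ (-((1-θ)*c)) ≤ (‖p.1‖^2) ^ (-((1-θ)*c)) := hb2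
        _ = ‖p.1‖ ^ (-(2*(1-θ)*c)) := by rw [sq_rpow_eq (norm_nonneg _)]; congr 1; ring
    calc |p.2| ^ (α - n) * (‖p.1‖^2 + p.2^2) ^ (-c)
        = |p.2| ^ (α - n) * ((‖p.1‖^2 + p.2^2) ^ (-(θ*c)) * (‖p.1‖^2 + p.2^2) ^ (-((1-θ)*c))) := by
          rw [← hsplit]
      _ ≤ |p.2| ^ (α - n) * (|p.2| ^ (-(2*θ*c)) * ‖p.1‖ ^ (-(2*(1-θ)*c))) := by
          apply mul_le_mul_of_nonneg_left ?_ (by positivity)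
          exact mul_le_mul b1 b2 (by positivity) (by positivity)
      _ = (|p.2| ^ (α - n) * |p.2| ^ (-(2*θ*c))) * ‖p.1‖ ^ (-(2*(1-θ)*c)) := by ring
      _ = |p.2| ^ (α - n + -(2*θ*c)) * ‖p.1‖ ^ (-(2*(1-θ)*c)) := by
          rw [← Real.rpow_add habs]
      _ = |p.2| ^ (α - n - 2*θ*c) * ‖p.1‖ ^ (-(2*(1-θ)*c)) := by ring_nf

end Aux

theorem kernel_mul_schwartz_integrable (n : ℕ) (hn : 2 ≤ n) (lam nu : ℂ)
    (h1 : 0 < (lam - nu).re) (h2 : (n : ℝ) - 1 < (lam + nu).re)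
    (φ : SchwartzMap (EuclideanSpace ℝ (Fin (n - 1)) × ℝ) ℂ) :
    Integrable (fun p => kker n lam nu p * φ p) volume := by
  obtain ⟨a, B, K, C, ha, hB, hB0, hK, hC, hbound⟩ := kker_bound n hn lam nu h1 h2
  have hmR : (((n-1 : ℕ)):ℝ) = (n:ℝ) - 1 := by
    rw [Nat.cast_sub (by omega : 1 ≤ n)]; simp
  have hmpos : (0:ℝ) < ((n-1:ℕ):ℝ) := by
    rw [hmR]
    have h2n : (2:ℝ) ≤ (n:ℝ) := by exact_mod_cast hn
    linarith
  set b := B / ((n-1:ℕ):ℝ) with hb_def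
  have hb : -1 < b := by
    rw [hb_def, lt_div_iff₀ hmpos]
    rw [hmR]; linarith
  have hb0 : b ≤ 0 := div_nonpos_of_nonpos_of_nonneg hB0 hmpos.le
  set Na := max a 0 + 2 with hNa
  have hNa2 : (2:ℝ) ≤ Na := by
    have : (0:ℝ) ≤ max a 0 := le_max_right _ _
    rw [hNa]; linarith
  set k := ⌈K + Na + 2*((n-1:ℕ):ℝ)⌉₊ with hk
  set Cφ := (2:ℝ)^k * ((Finset.Iic (k,0)).sup
    (fun m' => SchwartzMap.seminorm ℝ m'.1 m'.2)) φ with hCφ_def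
  have hφb : ∀ p, (1+‖p‖)^k * ‖φ p‖ ≤ Cφ := by
    intro p
    have := SchwartzMap.one_add_le_sup_seminorm_apply (𝕜 := ℝ) (m := (k,0))
      (k := k) (n := 0) le_rfl le_rfl φ p
    simpa [norm_iteratedFDeriv_zero] using this
  have hCφ : 0 ≤ Cφ := le_trans (by positivity) (hφb 0)
  -- the integrable majorant
  have hg : Integrable (fun s : ℝ => |s|^b * (1+|s|)^(-(2:ℝ))) :=
    oneD hb (by rw [max_eq_right hb0]; norm_num)
  have hf : Integrable (fun s : ℝ => |s|^a * (1+|s|)^(-Na)) := oneD ha (le_of_eq hNa.symm)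
  have hgE : Integrable
      (fun x : EuclideanSpace ℝ (Fin (n-1)) => ∏ i, (|x i|^b * (1+|x i|)^(-(2:ℝ)))) :=
    euclid_integrable_prod (fun s => |s|^b * (1+|s|)^(-(2:ℝ))) hg
  have hF : Integrable (fun p : EuclideanSpace ℝ (Fin (n-1)) × ℝ =>
      (C*Cφ) * ((∏ i, (|p.1 i|^b * (1+|p.1 i|)^(-(2:ℝ)))) * (|p.2|^a * (1+|p.2|)^(-Na)))) := by
    apply Integrable.const_mul
    rw [Measure.volume_eq_prod]
    exact hgE.mul_prod hf
  refine hF.mono' ((kker_aesm n lam nu).mul φ.continuous.aestronglyMeasurable) ?_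
  have hbad : ∀ᵐ p : EuclideanSpace ℝ (Fin (n-1)) × ℝ,
      ¬(p.2 = 0 ∨ ∃ i, p.1 i = 0) := by
    rw [ae_iff]; simpa only [not_not] using bad_null (m := n-1)
  filter_upwards [hbad] with p hp
  push_neg at hp
  obtain ⟨ht, hx⟩ := hp
  have hx0 : p.1 ≠ 0 := by
    intro h
    exact hx ⟨0, by omega⟩ (by rw [h]; rfl)
  have habs : (0:ℝ) < |p.2| := abs_pos.mpr ht
  have hxn : (0:ℝ) < ‖p.1‖ := norm_pos_iff.mpr hx0
  have hp1 : (1:ℝ) ≤ 1 + ‖p‖ := le_add_of_nonneg_right (norm_nonneg p)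
  have e_t : |p.2| ≤ ‖p‖ := by rw [← Real.norm_eq_abs]; exact norm_snd_le p
  have e_x : ‖p.1‖ ≤ ‖p‖ := norm_fst_le p
  have e_coord : ∀ i, |p.1 i| ≤ ‖p.1‖ := by
    intro i
    rw [EuclideanSpace.norm_eq, ← Real.sqrt_sq_eq_abs]
    apply Real.sqrt_le_sqrt
    have : |p.1 i| ^ 2 ≤ ∑ j, ‖p.1 j‖ ^ 2 := by
      have := Finset.single_le_sum (f := fun j => ‖p.1 j‖^2)
        (fun j _ => by positivity) (Finset.mem_univ i)
      simpa [Real.norm_eq_abs, sq_abs] using this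
    simpa [sq_abs] using this
  -- ‖p.1‖ ^ B ≤ ∏ i, |p.1 i| ^ b
  have hA2 : ‖p.1‖ ^ B ≤ ∏ i, |p.1 i| ^ b := by
    have step : ∀ i : Fin (n-1), ‖p.1‖ ^ b ≤ |p.1 i| ^ b := fun i =>
      Real.rpow_le_rpow_of_nonpos (abs_pos.mpr (hx i)) (e_coord i) hb0
    calc ‖p.1‖ ^ B = (‖p.1‖ ^ b) ^ ((n-1:ℕ)) := by
          rw [← Real.rpow_natCast (‖p.1‖ ^ b) (n-1), ← Real.rpow_mul (norm_nonneg _)]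
          congr 1
          rw [hb_def]
          exact (div_mul_cancel₀ B hmpos.ne').symm
      _ = ∏ _i : Fin (n-1), ‖p.1‖ ^ b := by
          rw [Finset.prod_const, Finset.card_univ, Fintype.card_fin]
      _ ≤ ∏ i, |p.1 i| ^ b :=
          Finset.prod_le_prod (fun i _ => by positivity) (fun i _ => step i)
  have hφp : ‖φ p‖ ≤ Cφ * (1+‖p‖) ^ (-(k:ℝ)) := by
    have h0 : (0:ℝ) < (1+‖p‖)^k := by positivity
    calc ‖φ p‖ = ((1+‖p‖)^k * ‖φ p‖) / (1+‖p‖)^k := by field_simp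
      _ ≤ Cφ / (1+‖p‖)^k := by
          gcongr
          exact hφb p
      _ = Cφ * (1+‖p‖) ^ (-(k:ℝ)) := by
          rw [Real.rpow_neg (by positivity), Real.rpow_natCast]
          ring
  have hDsplit : (1+‖p‖)^K * (1+‖p‖)^(-(k:ℝ))
      ≤ (1+|p.2|)^(-Na) * ∏ _i : Fin (n-1), (1+‖p‖)^(-(2:ℝ)) := by
    have s1 : (1+‖p‖)^K * (1+‖p‖)^(-(k:ℝ)) = (1+‖p‖)^(K + -(k:ℝ)) :=
      (Real.rpow_add (by positivity) _ _).symm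
    have hkge : K + Na + 2*((n-1:ℕ):ℝ) ≤ (k:ℝ) := Nat.le_ceil _
    have s2 : (1+‖p‖)^(K + -(k:ℝ)) ≤ (1+‖p‖)^(-(Na + 2*((n-1:ℕ):ℝ))) :=
      Real.rpow_le_rpow_of_exponent_le hp1 (by linarith)
    have s3 : (1+‖p‖)^(-(Na + 2*((n-1:ℕ):ℝ)))
        = (1+‖p‖)^(-Na) * ∏ _i : Fin (n-1), (1+‖p‖)^(-(2:ℝ)) := by
      rw [Finset.prod_const, Finset.card_univ, Fintype.card_fin,
        ← Real.rpow_natCast ((1+‖p‖)^(-(2:ℝ))) (n-1), ← Real.rpow_mul (by positivity),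
        ← Real.rpow_add (by positivity : (0:ℝ) < 1+‖p‖)]
      congr 1
      ring
    have s4 : (1+‖p‖)^(-Na) ≤ (1+|p.2|)^(-Na) :=
      Real.rpow_le_rpow_of_nonpos (by positivity) (by linarith) (by linarith)
    calc (1+‖p‖)^K * (1+‖p‖)^(-(k:ℝ)) = (1+‖p‖)^(K + -(k:ℝ)) := s1
      _ ≤ (1+‖p‖)^(-(Na + 2*((n-1:ℕ):ℝ))) := s2
      _ = (1+‖p‖)^(-Na) * ∏ _i : Fin (n-1), (1+‖p‖)^(-(2:ℝ)) := s3
      _ ≤ (1+|p.2|)^(-Na) * ∏ _i : Fin (n-1), (1+‖p‖)^(-(2:ℝ)) := by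
          apply mul_le_mul_of_nonneg_right s4 (by positivity)
  have hDcoord : (∏ _i : Fin (n-1), (1+‖p‖)^(-(2:ℝ)))
      ≤ ∏ i, (1+|p.1 i|)^(-(2:ℝ)) := by
    apply Finset.prod_le_prod (fun i _ => by positivity)
    intro i _
    apply Real.rpow_le_rpow_of_nonpos (by positivity) ?_ (by norm_num)
    have := (e_coord i).trans e_x
    linarith
  calc ‖kker n lam nu p * φ p‖ = ‖kker n lam nu p‖ * ‖φ p‖ := norm_mul _ _
    _ ≤ (C * (1+‖p‖)^K * |p.2|^a * ‖p.1‖^B) * (Cφ * (1+‖p‖)^(-(k:ℝ))) := by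
        apply mul_le_mul (hbound p ht hx0) hφp (norm_nonneg _) ?_
        have := hbound p ht hx0
        have h0 : (0:ℝ) ≤ C * (1+‖p‖)^K * |p.2|^a * ‖p.1‖^B := by positivity
        exact le_trans (norm_nonneg _) this
    _ = (C*Cφ) * ((|p.2|^a * ‖p.1‖^B) * ((1+‖p‖)^K * (1+‖p‖)^(-(k:ℝ)))) := by ring
    _ ≤ (C*Cφ) * ((|p.2|^a * (∏ i, |p.1 i|^b)) *
          ((1+|p.2|)^(-Na) * ∏ _i : Fin (n-1), (1+‖p‖)^(-(2:ℝ)))) := by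
        apply mul_le_mul_of_nonneg_left ?_ (by positivity)
        apply mul_le_mul ?_ hDsplit (by positivity) (by positivity)
        exact mul_le_mul_of_nonneg_left hA2 (by positivity)
    _ ≤ (C*Cφ) * ((|p.2|^a * (∏ i, |p.1 i|^b)) *
          ((1+|p.2|)^(-Na) * ∏ i, (1+|p.1 i|)^(-(2:ℝ)))) := by
        apply mul_le_mul_of_nonneg_left ?_ (by positivity)
        apply mul_le_mul_of_nonneg_left ?_ (by positivity)
        exact mul_le_mul_of_nonneg_left hDcoord (by positivity)
    _ = (C*Cφ) * ((∏ i, (|p.1 i|^b * (1+|p.1 i|)^(-(2:ℝ)))) * (|p.2|^a * (1+|p.2|)^(-Na))) := by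
        rw [Finset.prod_mul_distrib]
        ring
end

section
/- Let n ≥ 2 be an integer, λ ∈ ℂ, l ∈ ℕ, and set ν = λ + 2l and μ = λ − (n−1)/2. Let F be the polynomial in the n variables ζ₁, …, ζₙ over ℂ given by F = C̃_{2l}^μ(−(ζ₁² + ⋯ + ζ_{n−1}²), ζₙ). Then for every j with 1 ≤ j ≤ n−1, the polynomial identity ν·(∂F/∂ζ_j) − (1/2)·Σ_{i=1}^{n} ∂²(ζ_j · F)/∂ζᵢ² = 0 holds. (These are the fundamental differential equations (ν ∂/∂ζ_j − ½ Δ_{ℝⁿ} ζ_j)F = 0 of the F-method, satisfied by the Fourier symbol of the conformally covariant differential operator C̃_{λ,ν}.) -/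
open Finset MvPolynomial

section Aux
variable (n : ℕ)

lemma pderiv_pow' (p : MvPolynomial (Fin n) ℂ) (i : Fin n) (a : ℕ) :
    pderiv i (p ^ a) = C ((a:ℂ)) * (p ^ (a-1) * pderiv i p) := by
  rw [Derivation.leibniz_pow, smul_eq_mul, nsmul_eq_mul]
  rw [← C_eq_coe_nat]


variable (hn : 2 ≤ n)

local notation "em" => Fin.castLE (Nat.sub_le n 1)

lemma em_ne_last (k : Fin (n-1)) : (em k : Fin n) ≠ ⟨n-1, Nat.sub_lt (by omega) Nat.one_pos⟩ := by
  intro h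
  have := congrArg Fin.val h
  simp [Fin.castLE] at this
  omega

lemma sum_fin_split {M : Type*} [AddCommMonoid M] (f : Fin n → M) :
    ∑ i : Fin n, f i = f ⟨n-1, Nat.sub_lt (by omega) Nat.one_pos⟩ + ∑ k : Fin (n-1), f (em k) := by
  have huniv : (Finset.univ : Finset (Fin n)) =
      insert (⟨n-1, Nat.sub_lt (by omega) Nat.one_pos⟩ : Fin n) ((Finset.univ : Finset (Fin (n-1))).image em) := by
    ext i
    simp only [Finset.mem_univ, Finset.mem_insert, Finset.mem_image, true_iff]
    by_cases h : i = (⟨n-1, Nat.sub_lt (by omega) Nat.one_pos⟩ : Fin n)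
    · exact Or.inl h
    · right
      have hlt : i.val < n - 1 := by
        have h1 : i.val < n := i.isLt
        have h2 : i.val ≠ n - 1 := fun hc => h (Fin.ext hc)
        omega
      exact ⟨⟨i.val, hlt⟩, trivial, Fin.ext rfl⟩
  rw [huniv, Finset.sum_insert, Finset.sum_image]
  · intro a _ b _ hab
    exact Fin.castLE_injective _ hab
  · intro hmem
    obtain ⟨k, -, hk⟩ := Finset.mem_image.mp hmem
    exact em_ne_last n hn k hk


end Aux

noncomputable def SSp (n : ℕ) : MvPolynomial (Fin n) ℂ :=
  ∑ i : Fin (n-1), (X (Fin.castLE (Nat.sub_le n 1) i)) ^ 2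

noncomputable def ttp (n : ℕ) (hn : 2 ≤ n) : MvPolynomial (Fin n) ℂ :=
  X (⟨n-1, Nat.sub_lt (by omega) Nat.one_pos⟩ : Fin n)

section Aux2
variable (n : ℕ) (hn : 2 ≤ n)
local notation "em" => Fin.castLE (Nat.sub_le n 1)
local notation "SS" => SSp n
local notation "tt" => ttp n hn

lemma pderiv_em_S (k : Fin (n-1)) : pderiv (em k) SS = 2 * X (em k) := by
  rw [SSp, map_sum]
  rw [Finset.sum_eq_single k]
  · rw [pderiv_pow', pderiv_X_self]
    norm_num [map_ofNat]
  · intro b _ hbk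
    rw [pderiv_pow', pderiv_X_of_ne, mul_zero, mul_zero]
    exact fun h => hbk (Fin.castLE_injective _ h)
  · simp

lemma pderiv_last_S : pderiv (⟨n-1, Nat.sub_lt (by omega) Nat.one_pos⟩ : Fin n) SS = 0 := by
  rw [SSp, map_sum]
  apply Finset.sum_eq_zero
  intro k _
  rw [pderiv_pow', pderiv_X_of_ne (em_ne_last n hn k), mul_zero, mul_zero]

lemma pderiv_last_tt : pderiv (⟨n-1, Nat.sub_lt (by omega) Nat.one_pos⟩ : Fin n) tt = 1 := by
  rw [ttp]; exact pderiv_X_self _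

lemma pderiv_em_tt (k : Fin (n-1)) : pderiv (em k) tt = 0 :=
  pderiv_X_of_ne (fun h => (em_ne_last n hn k) h.symm)

/-- derivative of a monomial in the `em` directions -/
lemma pderiv_em_term (k : Fin (n-1)) (a b : ℕ) :
    pderiv (em k) (SS ^ a * tt ^ b) =
      C (2*(a:ℂ)) * (X (em k) * (SS ^ (a-1) * tt ^ b)) := by
  rw [pderiv_mul, pderiv_pow' n (tt) (em k) b, pderiv_em_tt n hn k,
    pderiv_pow', pderiv_em_S n k]
  simp only [map_mul, map_ofNat]
  ring

/-- derivative of a monomial in the last direction -/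
lemma pderiv_last_term (a b : ℕ) :
    pderiv (⟨n-1, Nat.sub_lt (by omega) Nat.one_pos⟩ : Fin n) (SS ^ a * tt ^ b) =
      C ((b:ℂ)) * (SS ^ a * tt ^ (b-1)) := by
  rw [pderiv_mul, pderiv_pow' n (tt), pderiv_last_tt n hn,
    pderiv_pow', pderiv_last_S n hn]
  ring


lemma cast_pred (b : ℕ) : ((b:ℂ)) * ((b-1 : ℕ):ℂ) = (b:ℂ) * ((b:ℂ)-1) := by
  cases b with
  | zero => simp
  | succ m => push_cast [Nat.add_sub_cancel]; ring

lemma shift_helper (p q : MvPolynomial (Fin n) ℂ) (a : ℕ) :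
    C (2 * (a:ℂ) * (2 * ((a-1:ℕ):ℂ))) * (p * p^(a-1-1) * q) =
      C (4*(a:ℂ)*((a:ℂ)-1)) * (p^(a-1) * q) := by
  match a with
  | 0 => simp
  | 1 => simp
  | (m+2) =>
    rw [show m+2-1-1 = m from rfl, show m+2-1 = m+1 from rfl, pow_succ]
    push_cast
    simp only [map_mul, map_add, map_sub, map_one, map_ofNat]
    ring

lemma lap_X_mul (j0 : Fin (n-1)) (p : MvPolynomial (Fin n) ℂ) :
    ∑ i : Fin n, pderiv i (pderiv i (X (em j0) * p)) =
      X (em j0) * (∑ i : Fin n, pderiv i (pderiv i p)) + 2 * pderiv (em j0) p := by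
  have key : ∀ i : Fin n, pderiv i (pderiv i (X (em j0) * p)) =
      X (em j0) * pderiv i (pderiv i p) + (if i = em j0 then 2 * pderiv i p else 0) := by
    intro i
    rw [pderiv_mul]
    by_cases h : i = em j0
    · subst h
      rw [pderiv_X_self, if_pos rfl, one_mul, map_add, pderiv_mul, pderiv_X_self]
      ring
    · rw [pderiv_X_of_ne (fun hc => h hc.symm), zero_mul, zero_add, pderiv_mul,
        pderiv_X_of_ne (fun hc => h hc.symm), zero_mul, zero_add, if_neg h, add_zero]

  simp_rw [key]
  rw [Finset.sum_add_distrib, Finset.sum_ite_eq' Finset.univ (em j0)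
    (fun i => 2 * pderiv i p), if_pos (Finset.mem_univ _), Finset.mul_sum]

lemma lap_term (a b : ℕ) :
    ∑ i : Fin n, pderiv i (pderiv i (SS ^ a * tt ^ b)) =
      C (4*(a:ℂ)*((a:ℂ)-1) + 2*((n:ℂ)-1)*(a:ℂ)) * (SS ^ (a-1) * tt ^ b)
      + C ((b:ℂ)*((b:ℂ)-1)) * (SS ^ a * tt ^ (b-2)) := by
  rw [sum_fin_split n hn (fun i => pderiv i (pderiv i (SS ^ a * tt ^ b)))]
  have hlast : pderiv (⟨n-1, Nat.sub_lt (by omega) Nat.one_pos⟩ : Fin n)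
      (pderiv (⟨n-1, Nat.sub_lt (by omega) Nat.one_pos⟩ : Fin n) (SS ^ a * tt ^ b)) =
      C ((b:ℂ)*((b:ℂ)-1)) * (SS ^ a * tt ^ (b-2)) := by
    rw [pderiv_last_term n hn, pderiv_mul, pderiv_C, zero_mul, zero_add,
      pderiv_last_term n hn, show b-1-1 = b-2 from by omega, ← mul_assoc, ← map_mul,
      cast_pred]
  have hem : ∀ k : Fin (n-1), pderiv (em k) (pderiv (em k) (SS ^ a * tt ^ b)) =
      C (2*(a:ℂ)) * (SS ^ (a-1) * tt ^ b)
      + C (2*(a:ℂ)*(2*((a-1:ℕ):ℂ))) * (X (em k)^2 * (SS ^ (a-1-1) * tt ^ b)) := by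
    intro k
    rw [pderiv_em_term n hn, pderiv_mul, pderiv_C, zero_mul, zero_add, pderiv_mul,
      pderiv_X_self, one_mul, pderiv_em_term n hn]
    simp only [map_mul]
    ring
  simp_rw [hem]
  rw [hlast, Finset.sum_add_distrib, Finset.sum_const, Finset.card_univ, Fintype.card_fin]
  simp_rw [← mul_assoc (X _ ^ 2), ← Finset.mul_sum, ← Finset.sum_mul]
  rw [show (∑ k : Fin (n-1), (X (em k) : MvPolynomial (Fin n) ℂ)^2) = SS from rfl]
  rw [shift_helper]
  rw [nsmul_eq_mul, ← C_eq_coe_nat]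
  rw [show ((n-1 : ℕ):ℂ) = (n:ℂ)-1 from by
    have : (1:ℕ) ≤ n := by omega
    push_cast [Nat.cast_sub this]; ring]
  simp only [map_add, map_mul, map_sub, map_one, map_ofNat]
  ring

end Aux2


noncomputable def dcoef (l : ℕ) (μ : ℂ) (j : ℕ) : ℂ :=
  (-1:ℂ)^j * ((-1 : ℂ) ^ j * 2 ^ (2 * l - 2 * j) /
      ((j.factorial : ℂ) * ((2 * l - 2 * j).factorial : ℂ)) *
    (ascPochhammer ℂ (l - j)).eval (μ + l))

lemma dcoef_eq (l : ℕ) (μ : ℂ) (j : ℕ) :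
    dcoef l μ j = 2 ^ (2 * l - 2 * j) /
      ((j.factorial : ℂ) * ((2 * l - 2 * j).factorial : ℂ)) *
    (ascPochhammer ℂ (l - j)).eval (μ + l) := by
  have hsq : (-1:ℂ)^j * (-1:ℂ)^j = 1 := by
    rw [← pow_add, ← two_mul, pow_mul]; norm_num
  rw [dcoef, show ((-1:ℂ)^j * ((-1 : ℂ) ^ j * 2 ^ (2 * l - 2 * j) /
      ((j.factorial : ℂ) * ((2 * l - 2 * j).factorial : ℂ)) *
    (ascPochhammer ℂ (l - j)).eval (μ + l))) = ((-1:ℂ)^j * (-1:ℂ)^j) *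
    (2 ^ (2 * l - 2 * j) / ((j.factorial : ℂ) * ((2 * l - 2 * j).factorial : ℂ)) *
    (ascPochhammer ℂ (l - j)).eval (μ + l)) from by ring, hsq, one_mul]

noncomputable def gterm (n : ℕ) (hn : 2 ≤ n) (l : ℕ) (μ : ℂ) (j : ℕ) :
    MvPolynomial (Fin n) ℂ :=
  C (dcoef l μ j) * (SSp n ^ j * ttp n hn ^ (2*l-2*j))

noncomputable def Uterm (n : ℕ) (hn : 2 ≤ n) (l : ℕ) (μ nu : ℂ) (j0 : Fin (n-1)) (j : ℕ) :
    MvPolynomial (Fin n) ℂ :=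
  C (dcoef l μ j * (j:ℂ) * (2*nu - 2*(j:ℂ) - (n:ℂ) + 1)) *
    (X (Fin.castLE (Nat.sub_le n 1) j0) * (SSp n ^ (j-1) * ttp n hn ^ (2*l-2*j)))

noncomputable def Wterm (n : ℕ) (hn : 2 ≤ n) (l : ℕ) (μ : ℂ) (j0 : Fin (n-1)) (j : ℕ) :
    MvPolynomial (Fin n) ℂ :=
  C (dcoef l μ j * (-(1/2:ℂ)) * ((2*l-2*j:ℕ):ℂ) * (((2*l-2*j:ℕ):ℂ) - 1)) *
    (X (Fin.castLE (Nat.sub_le n 1) j0) * (SSp n ^ j * ttp n hn ^ (2*l-2*j-2)))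

section Main
variable (n : ℕ) (hn : 2 ≤ n)
local notation "em" => Fin.castLE (Nat.sub_le n 1)
local notation "SS" => SSp n
local notation "tt" => ttp n hn

lemma lap_C_mul (a : ℂ) (p : MvPolynomial (Fin n) ℂ) :
    ∑ i : Fin n, pderiv i (pderiv i (C a * p)) =
      C a * ∑ i : Fin n, pderiv i (pderiv i p) := by
  simp only [pderiv_mul, pderiv_C, zero_mul, zero_add, Finset.mul_sum]

lemma per_term (l : ℕ) (μ nu : ℂ) (j0 : Fin (n-1)) (j : ℕ) :
    C nu * pderiv (em j0) (gterm n hn l μ j) -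
      C (1/2 : ℂ) * ∑ i : Fin n, pderiv i (pderiv i (X (em j0) * gterm n hn l μ j)) =
    Uterm n hn l μ nu j0 j + Wterm n hn l μ j0 j := by
  rw [lap_X_mul n j0, gterm, lap_C_mul, lap_term n hn]
  rw [pderiv_mul, pderiv_C, zero_mul, zero_add, pderiv_em_term n hn]
  rw [Uterm, Wterm]
  have h2 : (C (1/2 : ℂ) : MvPolynomial (Fin n) ℂ) * 2 = 1 := by
    rw [← map_ofNat (C : ℂ →+* MvPolynomial (Fin n) ℂ) 2, ← map_mul]
    norm_num
  simp only [map_mul, map_add, map_sub, map_one, map_neg, map_ofNat, C_eq_coe_nat]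
  linear_combination (C (dcoef l μ j) * (j : MvPolynomial (Fin n) ℂ) * X (em j0) *
    SSp n ^ (j-1) * ttp n hn ^ (2*l-2*j) *
    (1 - (n : MvPolynomial (Fin n) ℂ) - 2*(j : MvPolynomial (Fin n) ℂ))) * h2

end Main

section Main2
variable (n : ℕ) (hn : 2 ≤ n)

lemma F_eq (l : ℕ) (μ : ℂ) :
    (∑ j ∈ Finset.range (l + 1),
      C ((-1 : ℂ) ^ j * 2 ^ (2 * l - 2 * j) /
            ((j.factorial : ℂ) * ((2 * l - 2 * j).factorial : ℂ)) *
          (ascPochhammer ℂ (l - j)).eval (μ + l)) *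
        (-(∑ i : Fin (n - 1), X (Fin.castLE (Nat.sub_le n 1) i) ^ 2)) ^ j *
        X (⟨n - 1, Nat.sub_lt (by omega) Nat.one_pos⟩ : Fin n) ^ (2 * l - 2 * j) : MvPolynomial (Fin n) ℂ) =
      ∑ j ∈ Finset.range (l + 1), gterm n hn l μ j := by
  apply Finset.sum_congr rfl
  intro j _
  rw [gterm, dcoef]
  rw [show (-(∑ i : Fin (n-1), (X (Fin.castLE (Nat.sub_le n 1) i) :
      MvPolynomial (Fin n) ℂ)^2)) = -SSp n from rfl]
  rw [show (X (⟨n - 1, Nat.sub_lt (by omega) Nat.one_pos⟩ : Fin n) : MvPolynomial (Fin n) ℂ) = ttp n hn from rfl]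
  rw [neg_pow]
  simp only [map_mul, map_pow, map_neg, map_one]
  ring

end Main2

/-- The fundamental differential equations `(ν ∂/∂ζⱼ − ½ Δ_{ℝⁿ} ζⱼ)F = 0` of the
F-method, satisfied by the Fourier symbol
`F = C̃_{2l}^μ(−(ζ₁²+⋯+ζ_{n−1}²), ζₙ)` of the conformally covariant operator
`C̃_{λ,ν}`, where `ν = λ + 2l`, `μ = λ − (n−1)/2`. -/
theorem fundamental_differential_equations (n : ℕ) (hn : 2 ≤ n) (lam : ℂ) (l : ℕ)
    (nu μ : ℂ) (hnu : nu = lam + 2 * (l : ℂ)) (hμ : μ = lam - ((n : ℂ) - 1) / 2)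
    (F : MvPolynomial (Fin n) ℂ)
    (hF : F = ∑ j ∈ Finset.range (l + 1),
      C ((-1 : ℂ) ^ j * 2 ^ (2 * l - 2 * j) /
            ((j.factorial : ℂ) * ((2 * l - 2 * j).factorial : ℂ)) *
          (ascPochhammer ℂ (l - j)).eval (μ + l)) *
        (-(∑ i : Fin (n - 1), X (Fin.castLE (Nat.sub_le n 1) i) ^ 2)) ^ j *
        X (⟨n - 1, by omega⟩ : Fin n) ^ (2 * l - 2 * j)) :
    ∀ j : Fin (n - 1),
      C nu * pderiv (Fin.castLE (Nat.sub_le n 1) j) F -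
          C (1 / 2 : ℂ) *
            ∑ i : Fin n, pderiv i (pderiv i (X (Fin.castLE (Nat.sub_le n 1) j) * F)) = 0 := by
  intro j0
  rw [hF, F_eq n hn l μ]
  have expand : C nu * pderiv (Fin.castLE (Nat.sub_le n 1) j0)
        (∑ j ∈ Finset.range (l+1), gterm n hn l μ j)
      - C (1/2:ℂ) * ∑ i : Fin n, pderiv i (pderiv i (X (Fin.castLE (Nat.sub_le n 1) j0) *
        ∑ j ∈ Finset.range (l+1), gterm n hn l μ j))
      = ∑ j ∈ Finset.range (l+1), (C nu * pderiv (Fin.castLE (Nat.sub_le n 1) j0)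
          (gterm n hn l μ j)
        - C (1/2:ℂ) * ∑ i : Fin n, pderiv i (pderiv i (X (Fin.castLE (Nat.sub_le n 1) j0) *
          gterm n hn l μ j))) := by
    simp only [Finset.mul_sum, map_sum]
    rw [Finset.sum_sub_distrib]
    congr 1
    exact Finset.sum_comm
  rw [expand, Finset.sum_congr rfl (fun j _ => per_term n hn l μ nu j0 j)]
  rw [Finset.sum_add_distrib]
  rw [Finset.sum_range_succ' (Uterm n hn l μ nu j0)]
  rw [Finset.sum_range_succ (Wterm n hn l μ j0)]
  have hU0 : Uterm n hn l μ nu j0 0 = 0 := by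
    simp [Uterm]
  have hWl : Wterm n hn l μ j0 l = 0 := by
    simp [Wterm, show 2*l-2*l = 0 from by omega]
  rw [hU0, hWl, add_zero, add_zero, ← Finset.sum_add_distrib]
  apply Finset.sum_eq_zero
  intro k hk
  replace hk : k < l := Finset.mem_range.mp hk
  rw [Uterm, Wterm, show k+1-1 = k from rfl,
    show 2*l-2*(k+1) = 2*l-2*k-2 from by omega]
  rw [← add_mul, ← map_add]
  have hcoef : dcoef l μ (k+1) * ((k+1:ℕ):ℂ) * (2*nu - 2*((k+1:ℕ):ℂ) - (n:ℂ) + 1)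
      + dcoef l μ k * (-(1/2:ℂ)) * ((2*l-2*k:ℕ):ℂ) * (((2*l-2*k:ℕ):ℂ) - 1) = 0 := by
    subst hnu hμ
    obtain ⟨m, hm⟩ : ∃ m, 2*l-2*k = m+2 := ⟨2*l-2*k-2, by omega⟩
    have hkf : (k.factorial:ℂ) ≠ 0 := Nat.cast_ne_zero.2 (Nat.factorial_ne_zero k)
    have hmf : (m.factorial:ℂ) ≠ 0 := Nat.cast_ne_zero.2 (Nat.factorial_ne_zero m)
    have hk1 : ((k:ℂ)+1) ≠ 0 := by
      have h : ((k+1:ℕ):ℂ) ≠ 0 := Nat.cast_ne_zero.2 (Nat.succ_ne_zero k)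
      push_cast at h; exact h
    have hm2 : ((m:ℂ)+2) ≠ 0 := by
      have h : ((m+2:ℕ):ℂ) ≠ 0 := Nat.cast_ne_zero.2 (by omega)
      push_cast at h; exact h
    have hm1 : ((m:ℂ)+1) ≠ 0 := by
      have h : ((m+1:ℕ):ℂ) ≠ 0 := Nat.cast_ne_zero.2 (by omega)
      push_cast at h; exact h
    have hc1 : ((l-k-1:ℕ):ℂ) = (l:ℂ)-(k:ℂ)-1 := by
      rw [show l-k-1 = l-(k+1) from by omega, Nat.cast_sub (by omega : k+1 ≤ l)]
      push_cast
      ring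
    set μ' := lam - ((n:ℂ)-1)/2 with hμ'
    have hA : dcoef l μ' (k+1) * ((k+1:ℕ):ℂ) =
        2^m * (ascPochhammer ℂ (l-k-1)).eval (μ'+l) /
          ((k.factorial:ℂ) * (m.factorial:ℂ)) := by
      rw [dcoef_eq, show l-(k+1) = l-k-1 from by omega,
        show 2*l-2*(k+1) = m from by omega, Nat.factorial_succ]
      push_cast
      simp only [div_mul_eq_mul_div]
      rw [div_eq_div_iff (by exact mul_ne_zero (mul_ne_zero hk1 hkf) hmf)
        (mul_ne_zero hkf hmf)]
      ring
    have hB : dcoef l μ' k * (-(1/2:ℂ)) * ((2*l-2*k:ℕ):ℂ) * (((2*l-2*k:ℕ):ℂ) - 1) =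
        -(2^m * ((ascPochhammer ℂ (l-k-1)).eval (μ'+l) * ((μ'+l) + ((l:ℂ)-(k:ℂ)-1))) * 2) /
          ((k.factorial:ℂ) * (m.factorial:ℂ)) := by
      rw [dcoef_eq, show l-k = (l-k-1)+1 from by omega, ascPochhammer_succ_eval, hm]
      have hfact : (((m+2).factorial : ℕ) : ℂ) = ((m:ℂ)+2)*((m:ℂ)+1)*(m.factorial:ℂ) := by
        rw [show m+2 = (m+1)+1 from rfl, Nat.factorial_succ, Nat.factorial_succ]
        push_cast
        ring
      rw [hfact, hc1, pow_add]
      push_cast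
      simp only [div_mul_eq_mul_div]
      rw [div_eq_div_iff
        (by exact mul_ne_zero hkf (mul_ne_zero (mul_ne_zero hm2 hm1) hmf))
        (mul_ne_zero hkf hmf)]
      ring
    rw [hA, hB]
    push_cast
    simp only [div_mul_eq_mul_div]
    rw [← add_div, div_eq_zero_iff]
    left
    ring
  rw [hcoef, map_zero, zero_mul]
end

section
/- Let n ≥ 1 and let f : ℝⁿ → ℂ be a Lebesgue integrable function with compact support. Then its Fourier–Laplace transform (F_c f)(ζ) = ∫_{ℝⁿ} f(x) · exp(Σ_{i=1}^{n} xᵢ ζᵢ) dx, viewed as a function of ζ = (ζ₁, …, ζₙ) ∈ ℂⁿ, is well defined (the integrand is integrable for each ζ) and is holomorphic on all of ℂⁿ, i.e. complex differentiable as a map ℂⁿ → ℂ. -/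
open MeasureTheory Metric

set_option maxHeartbeats 1000000
set_option synthInstance.maxHeartbeats 400000

private lemma coord_le_norm_real {n : ℕ} (x : EuclideanSpace ℝ (Fin n)) (i : Fin n) :
    |x i| ≤ ‖x‖ := by
  have := EuclideanSpace.norm_eq x
  rw [this]
  have h : |x i| = Real.sqrt (|x i| ^ 2) := by
    rw [Real.sqrt_sq_eq_abs, abs_abs]
  rw [h]
  apply Real.sqrt_le_sqrt
  simp only [Real.norm_eq_abs]
  exact Finset.single_le_sum (f := fun j => |x j| ^ 2)
    (fun j _ => by positivity) (Finset.mem_univ i)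

private lemma coord_le_norm_complex {n : ℕ} (ζ : EuclideanSpace ℂ (Fin n)) (i : Fin n) :
    ‖ζ i‖ ≤ ‖ζ‖ := by
  rw [EuclideanSpace.norm_eq]
  have h : ‖ζ i‖ = Real.sqrt (‖ζ i‖ ^ 2) := by
    rw [Real.sqrt_sq (norm_nonneg _)]
  rw [h]
  apply Real.sqrt_le_sqrt
  exact Finset.single_le_sum (f := fun j => ‖ζ j‖ ^ 2)
    (fun j _ => by positivity) (Finset.mem_univ i)

/-- The Fourier–Laplace transform `(F_c f)(ζ) = ∫_{ℝⁿ} f(x) e^{⟨x,ζ⟩} dx` of a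
compactly supported integrable function is well defined and holomorphic on all
of `ℂⁿ`. -/
theorem fourier_laplace_entire (n : ℕ) (hn : 1 ≤ n)
    (f : EuclideanSpace ℝ (Fin n) → ℂ)
    (hf : Integrable f volume) (hsupp : HasCompactSupport f) :
    (∀ ζ : EuclideanSpace ℂ (Fin n),
        Integrable (fun x : EuclideanSpace ℝ (Fin n) =>
          f x * Complex.exp (∑ i : Fin n, ((x i : ℝ) : ℂ) * ζ i)) volume) ∧
      Differentiable ℂ (fun ζ : EuclideanSpace ℂ (Fin n) =>
        ∫ x : EuclideanSpace ℝ (Fin n),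
          f x * Complex.exp (∑ i : Fin n, ((x i : ℝ) : ℂ) * ζ i)) := by
  obtain ⟨R₀, hR₀⟩ := hsupp.isCompact.isBounded.exists_norm_le
  set R : ℝ := max R₀ 0 with hRdef
  have hR : ∀ x ∈ tsupport f, ‖x‖ ≤ R := fun x hx => (hR₀ x hx).trans (le_max_left _ _)
  have hR0 : 0 ≤ R := le_max_right _ _
  -- key pointwise estimate
  have key : ∀ (x : EuclideanSpace ℝ (Fin n)) (ζ : EuclideanSpace ℂ (Fin n)),
      x ∈ tsupport f →
      ‖Complex.exp (∑ i : Fin n, ((x i : ℝ) : ℂ) * ζ i)‖ ≤ Real.exp (n * R * ‖ζ‖) := by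
    intro x ζ hx
    rw [Complex.norm_exp]
    apply Real.exp_le_exp.2
    calc (∑ i : Fin n, ((x i : ℝ) : ℂ) * ζ i).re
        ≤ ‖∑ i : Fin n, ((x i : ℝ) : ℂ) * ζ i‖ := by
          exact Complex.re_le_norm _
      _ ≤ ∑ i : Fin n, ‖((x i : ℝ) : ℂ) * ζ i‖ := norm_sum_le _ _
      _ ≤ ∑ _i : Fin n, R * ‖ζ‖ := by
          apply Finset.sum_le_sum
          intro i _
          rw [norm_mul, Complex.norm_real]
          exact mul_le_mul ((coord_le_norm_real x i).trans (hR x hx))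
            (coord_le_norm_complex ζ i) (norm_nonneg _) hR0
      _ = n * R * ‖ζ‖ := by
          simp [Finset.sum_const, mul_assoc]
  -- measurability of the integrand for each ζ
  have meas : ∀ ζ : EuclideanSpace ℂ (Fin n),
      AEStronglyMeasurable (fun x : EuclideanSpace ℝ (Fin n) =>
        f x * Complex.exp (∑ i : Fin n, ((x i : ℝ) : ℂ) * ζ i)) volume := by
    intro ζ
    apply hf.aestronglyMeasurable.mul
    apply Continuous.aestronglyMeasurable
    exact Complex.continuous_exp.comp (continuous_finset_sum _ fun i _ =>
      (Complex.continuous_ofReal.comp (PiLp.continuous_apply 2 _ i)).mul continuous_const)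
  have int : ∀ ζ : EuclideanSpace ℂ (Fin n),
      Integrable (fun x : EuclideanSpace ℝ (Fin n) =>
        f x * Complex.exp (∑ i : Fin n, ((x i : ℝ) : ℂ) * ζ i)) volume := by
    intro ζ
    apply Integrable.mono' (g := fun x => Real.exp (n * R * ‖ζ‖) * ‖f x‖)
      (hf.norm.const_mul _) (meas ζ)
    filter_upwards with x
    by_cases hx : x ∈ tsupport f
    · rw [norm_mul]
      calc ‖f x‖ * ‖Complex.exp _‖ ≤ ‖f x‖ * Real.exp (n * R * ‖ζ‖) :=
            mul_le_mul_of_nonneg_left (key x ζ hx) (norm_nonneg _)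
        _ = _ := mul_comm _ _
    · have : f x = 0 := image_eq_zero_of_notMem_tsupport hx
      simp [this, mul_nonneg (Real.exp_nonneg _) (norm_nonneg (f x))]
  refine ⟨int, ?_⟩
  intro ζ₀
  -- the linear functional `L x : ζ ↦ ∑ xᵢ ζᵢ`
  set L : EuclideanSpace ℝ (Fin n) → (EuclideanSpace ℂ (Fin n) →L[ℂ] ℂ) :=
    fun x => ∑ i : Fin n, ((x i : ℝ) : ℂ) • EuclideanSpace.proj i with hL
  have hLapply : ∀ x ζ, L x ζ = ∑ i : Fin n, ((x i : ℝ) : ℂ) * ζ i := by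
    intro x ζ
    simp [hL, ContinuousLinearMap.sum_apply, smul_eq_mul]
  have hLnorm : ∀ x ∈ tsupport f, ‖L x‖ ≤ n * R := by
    intro x hx
    calc ‖L x‖ ≤ ∑ i : Fin n, ‖((x i : ℝ) : ℂ) • (EuclideanSpace.proj i :
          EuclideanSpace ℂ (Fin n) →L[ℂ] ℂ)‖ := norm_sum_le _ _
      _ ≤ ∑ _i : Fin n, R := by
          apply Finset.sum_le_sum
          intro i _
          have hproj : ‖(EuclideanSpace.proj i : EuclideanSpace ℂ (Fin n) →L[ℂ] ℂ)‖ ≤ 1 := by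
            apply ContinuousLinearMap.opNorm_le_bound _ zero_le_one
            intro ζ
            rw [one_mul]
            exact coord_le_norm_complex ζ i
          calc ‖((x i : ℝ) : ℂ) • (EuclideanSpace.proj i :
                EuclideanSpace ℂ (Fin n) →L[ℂ] ℂ)‖
              ≤ ‖((x i : ℝ) : ℂ)‖ * ‖(EuclideanSpace.proj i :
                EuclideanSpace ℂ (Fin n) →L[ℂ] ℂ)‖ := ContinuousLinearMap.opNorm_smul_le _ _
            _ ≤ R * 1 := by
                rw [Complex.norm_real]
                exact mul_le_mul ((coord_le_norm_real x i).trans (hR x hx)) hproj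
                  (norm_nonneg _) hR0
            _ = R := mul_one R
      _ = n * R := by simp [Finset.sum_const]
  set F' : EuclideanSpace ℂ (Fin n) → EuclideanSpace ℝ (Fin n) →
      (EuclideanSpace ℂ (Fin n) →L[ℂ] ℂ) :=
    fun ζ x => (f x * Complex.exp (∑ i : Fin n, ((x i : ℝ) : ℂ) * ζ i)) • L x with hF'
  set C : ℝ := (n * R) * Real.exp (n * R * (‖ζ₀‖ + 1)) with hC
  have hderiv := hasFDerivAt_integral_of_dominated_of_fderiv_le
    (F := fun ζ (x : EuclideanSpace ℝ (Fin n)) =>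
      f x * Complex.exp (∑ i : Fin n, ((x i : ℝ) : ℂ) * ζ i))
    (F' := F') (x₀ := ζ₀) (bound := fun x => C * ‖f x‖) (μ := volume)
    (s := ball ζ₀ 1) (ball_mem_nhds ζ₀ one_pos)
    (Filter.Eventually.of_forall fun ζ => meas ζ) (int ζ₀)
    ?_ ?_ ((hf.norm.const_mul C)) ?_
  · exact hderiv.differentiableAt
  · -- measurability of F' ζ₀
    apply AEStronglyMeasurable.smul (f := fun x => f x * Complex.exp (∑ i : Fin n, ((x i : ℝ) : ℂ) * ζ₀ i)) (g := L)
    · exact (int ζ₀).aestronglyMeasurable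
    · apply Continuous.aestronglyMeasurable
      apply continuous_finset_sum
      intro i _
      exact ((Complex.continuous_ofReal.comp (PiLp.continuous_apply 2 _ i)).smul continuous_const)
  · -- bound
    filter_upwards with x ζ hζ
    by_cases hx : x ∈ tsupport f
    · rw [hF']
      simp only []
      have h1 : ‖Complex.exp (∑ i : Fin n, ((x i : ℝ) : ℂ) * ζ i)‖
          ≤ Real.exp (n * R * (‖ζ₀‖ + 1)) := by
        refine (key x ζ hx).trans (Real.exp_le_exp.2 ?_)
        have hz : ‖ζ‖ ≤ ‖ζ₀‖ + 1 := by
          have h1 := mem_ball_iff_norm.1 hζ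
          have h2 := norm_le_norm_add_norm_sub' ζ ζ₀
          linarith
        exact mul_le_mul_of_nonneg_left hz (mul_nonneg (Nat.cast_nonneg n) hR0)
      calc ‖(f x * Complex.exp (∑ i : Fin n, ((x i : ℝ) : ℂ) * ζ i)) • L x‖
          ≤ ‖f x * Complex.exp (∑ i : Fin n, ((x i : ℝ) : ℂ) * ζ i)‖ * ‖L x‖ :=
            ContinuousLinearMap.opNorm_smul_le _ _
        _ = ‖f x‖ * ‖Complex.exp (∑ i : Fin n, ((x i : ℝ) : ℂ) * ζ i)‖ * ‖L x‖ := by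
            rw [norm_mul]
        _ ≤ ‖f x‖ * Real.exp (n * R * (‖ζ₀‖ + 1)) * (n * R) :=
            mul_le_mul (mul_le_mul_of_nonneg_left h1 (norm_nonneg _))
              (hLnorm x hx) (norm_nonneg _)
              (mul_nonneg (norm_nonneg _) (Real.exp_nonneg _))
        _ = C * ‖f x‖ := by rw [hC]; ring
    · have hfx : f x = 0 := image_eq_zero_of_notMem_tsupport hx
      rw [hF']
      simp only [hfx, zero_mul, norm_zero, mul_zero]
      rw [zero_smul ℂ (L x), norm_zero]
  · -- differentiability
    filter_upwards with x ζ hζ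
    have hlin : HasFDerivAt (fun ζ' : EuclideanSpace ℂ (Fin n) =>
        ∑ i : Fin n, ((x i : ℝ) : ℂ) * ζ' i) (L x) ζ := by
      exact ((L x).hasFDerivAt (x := ζ)).congr_of_eventuallyEq
        (Filter.Eventually.of_forall fun ζ' => (hLapply x ζ').symm)
    have hexp : HasFDerivAt (fun ζ' : EuclideanSpace ℂ (Fin n) =>
        Complex.exp (∑ i : Fin n, ((x i : ℝ) : ℂ) * ζ' i))
        (Complex.exp (∑ i : Fin n, ((x i : ℝ) : ℂ) * ζ i) • L x) ζ := hlin.cexp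
    have := hexp.const_mul (f x)
    rw [hF']
    simp only [smul_smul] at this ⊢
    convert this using 2
end
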